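/- For every real x ≥ 1, one has √(2π) · x^(x - 1/2) · e^{-x} ≤ Γ(x) ≤ √(2π) · x^(x - 1/2) · e^{-x} · e^{1/12}. -/

import Mathlib

set_option maxHeartbeats 1000000
open Real Filter Set


private lemma stir_hasDeriv_log (y : ℝ) (hy : 0 < y) :
    HasDerivAt (fun z : ℝ => log (z + 1) - log z) (1/(y+1) - 1/y) y := by
  have h1 : HasDerivAt (fun z : ℝ => log (z + 1)) (1/(y+1)) y := by
    have := ((hasDerivAt_id y).add_const 1).log (by simp; linarith)
    simpa using this
  have h2 : HasDerivAt (fun z : ℝ => log z) (1/y) y := by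
    simpa [one_div] using (hasDerivAt_id y).log hy.ne'
  exact h1.sub h2

private lemma stir_tendsto_logdiff :
    Tendsto (fun y : ℝ => log (y+1) - log y) atTop (nhds 0) := by
  have : (fun y : ℝ => log (y+1) - log y) =ᶠ[atTop] fun y => log (1 + 1/y) := by
    filter_upwards [eventually_gt_atTop 0] with y hy
    rw [← log_div (by linarith) hy.ne']
    congr 1; field_simp
  rw [tendsto_congr' this]
  have h : Tendsto (fun y : ℝ => 1 + 1/y) atTop (nhds 1) := by
    have := (tendsto_const_nhds (x := (1:ℝ)) (f := atTop)).add tendsto_inv_atTop_zero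
    simpa [one_div] using this
  simpa [Function.comp_def] using (Real.continuousAt_log (by norm_num : (1:ℝ) ≠ 0)).tendsto.comp h

private lemma stir_log_lower {x : ℝ} (hx : 1 ≤ x) :
    2/(2*x+1) ≤ log (x+1) - log x := by
  set f : ℝ → ℝ := fun y => (log (y+1) - log y) - 2 * (2*y+1)⁻¹ with hf
  have hderiv : ∀ y : ℝ, 1 ≤ y → HasDerivAt f
      ((1/(y+1) - 1/y) - 2 * (-(2*1)/(2*y+1)^2)) y := by
    intro y hy
    have hy0 : (0:ℝ) < y := by linarith
    have h1 := stir_hasDeriv_log y hy0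
    have hne : (2*y+1) ≠ 0 := by positivity
    have h2 : HasDerivAt (fun z : ℝ => 2 * (2*z+1)⁻¹) (2 * (-(2*1)/(2*y+1)^2)) y := by
      have := (((hasDerivAt_id y).const_mul 2).add_const 1).inv hne
      simpa using this.const_mul 2
    exact h1.sub h2
  have hanti : AntitoneOn f (Ici 1) := by
    apply antitoneOn_of_deriv_nonpos (convex_Ici 1)
    · exact fun y hy => ((hderiv y hy).continuousAt.continuousWithinAt)
    · intro y hy
      rw [interior_Ici] at hy
      exact ((hderiv y hy.le).differentiableAt).differentiableWithinAt
    · intro y hy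
      rw [interior_Ici] at hy
      have hy1 : (1:ℝ) ≤ y := hy.le
      have hy0 : (0:ℝ) < y := by linarith
      rw [(hderiv y hy1).deriv]
      have : (1/(y+1) - 1/y) - 2 * (-(2*1)/(2*y+1)^2) = -(1/(y*(y+1)*(2*y+1)^2)) := by
        field_simp; ring
      rw [this, neg_nonpos]
      positivity
  have hlim : Tendsto f atTop (nhds 0) := by
    have h2 : Tendsto (fun y : ℝ => 2 * (2*y+1)⁻¹) atTop (nhds 0) := by
      have : Tendsto (fun y : ℝ => 2*y+1) atTop atTop :=
        tendsto_atTop_add_const_right _ 1 (tendsto_id.const_mul_atTop (by norm_num))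
      simpa using (this.inv_tendsto_atTop).const_mul 2
    simpa using stir_tendsto_logdiff.sub h2
  have : 0 ≤ f x := by
    apply le_of_tendsto hlim
    filter_upwards [eventually_ge_atTop x] with y hy
    exact hanti (mem_Ici.2 hx) (mem_Ici.2 (hx.trans hy)) hy
  have h2 : 2 * (2*x+1)⁻¹ ≤ log (x+1) - log x := by
    simpa [hf, sub_nonneg] using this
  calc 2/(2*x+1) = 2 * (2*x+1)⁻¹ := by rw [div_eq_mul_inv]
    _ ≤ _ := h2

private lemma stir_log_upper {x : ℝ} (hx : 1 ≤ x) :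
    log (x+1) - log x ≤ (6*x)⁻¹ + (6*(x+1))⁻¹ + 4 * (3*(2*x+1))⁻¹ := by
  set f : ℝ → ℝ := fun y => (6*y)⁻¹ + (6*(y+1))⁻¹ + 4 * (3*(2*y+1))⁻¹
      - (log (y+1) - log y) with hf
  have hderiv : ∀ y : ℝ, 1 ≤ y → HasDerivAt f
      (((-(6*1)/(6*y)^2 + -(6*1)/(6*(y+1))^2) + 4 * (-(3*(2*1))/(3*(2*y+1))^2))
        - (1/(y+1) - 1/y)) y := by
    intro y hy
    have hy0 : (0:ℝ) < y := by linarith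
    have h1 : HasDerivAt (fun z : ℝ => (6*z)⁻¹) (-(6*1)/(6*y)^2) y :=
      ((hasDerivAt_id y).const_mul 6).inv (by positivity)
    have h2 : HasDerivAt (fun z : ℝ => (6*(z+1))⁻¹) (-(6*1)/(6*(y+1))^2) y :=
      (((hasDerivAt_id y).add_const 1).const_mul 6).inv (by positivity)
    have h3 : HasDerivAt (fun z : ℝ => 4 * (3*(2*z+1))⁻¹)
        (4 * (-(3*(2*1))/(3*(2*y+1))^2)) y := by
      exact ((((((hasDerivAt_id y).const_mul 2).add_const 1)).const_mul 3).inv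
        (by positivity)).const_mul 4
    exact ((h1.add h2).add h3).sub
      (by
        have h1' : HasDerivAt (fun z : ℝ => log (z + 1)) (1/(y+1)) y := by
          have := ((hasDerivAt_id y).add_const 1).log (by simp; linarith)
          simpa using this
        have h2' : HasDerivAt (fun z : ℝ => log z) (1/y) y := by
          simpa [one_div] using (hasDerivAt_id y).log hy0.ne'
        exact h1'.sub h2')
  have hanti : AntitoneOn f (Ici 1) := by
    apply antitoneOn_of_deriv_nonpos (convex_Ici 1)
    · exact fun y hy => ((hderiv y hy).continuousAt.continuousWithinAt)
    · intro y hy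
      rw [interior_Ici] at hy
      exact ((hderiv y hy.le).differentiableAt).differentiableWithinAt
    · intro y hy
      rw [interior_Ici] at hy
      have hy1 : (1:ℝ) ≤ y := hy.le
      have hy0 : (0:ℝ) < y := by linarith
      rw [(hderiv y hy1).deriv]
      have : ((-(6*1)/(6*y)^2 + -(6*1)/(6*(y+1))^2) + 4 * (-(3*(2*1))/(3*(2*y+1))^2))
          - (1/(y+1) - 1/y) = -(1/(6*y^2*(y+1)^2*(2*y+1)^2)) := by
        field_simp; ring
      rw [this, neg_nonpos]
      positivity
  have hlim : Tendsto f atTop (nhds 0) := by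
    have hlog : Tendsto (fun y : ℝ => log (y+1) - log y) atTop (nhds 0) := by
      have : (fun y : ℝ => log (y+1) - log y) =ᶠ[atTop] fun y => log (1 + 1/y) := by
        filter_upwards [eventually_gt_atTop 0] with y hy
        rw [← log_div (by linarith) hy.ne']
        congr 1; field_simp
      rw [tendsto_congr' this]
      have h : Tendsto (fun y : ℝ => 1 + 1/y) atTop (nhds 1) := by
        have := (tendsto_const_nhds (x := (1:ℝ)) (f := atTop)).add tendsto_inv_atTop_zero
        simpa [one_div] using this
      simpa [Function.comp_def] using (Real.continuousAt_log (by norm_num : (1:ℝ) ≠ 0)).tendsto.comp h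
    have t1 : Tendsto (fun y : ℝ => (6*y)⁻¹) atTop (nhds 0) :=
      (tendsto_id.const_mul_atTop (by norm_num : (0:ℝ) < 6)).inv_tendsto_atTop
    have t2 : Tendsto (fun y : ℝ => (6*(y+1))⁻¹) atTop (nhds 0) :=
      ((tendsto_atTop_add_const_right _ 1 tendsto_id).const_mul_atTop
        (by norm_num : (0:ℝ) < 6)).inv_tendsto_atTop
    have t3 : Tendsto (fun y : ℝ => 4 * (3*(2*y+1))⁻¹) atTop (nhds 0) := by
      have ha : Tendsto (fun y : ℝ => 2*y) atTop atTop :=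
        tendsto_id.const_mul_atTop (by norm_num : (0:ℝ) < 2)
      have hb : Tendsto (fun y : ℝ => 2*y+1) atTop atTop :=
        tendsto_atTop_add_const_right _ 1 ha
      have hc : Tendsto (fun y : ℝ => 3*(2*y+1)) atTop atTop :=
        hb.const_mul_atTop (by norm_num : (0:ℝ) < 3)
      simpa using hc.inv_tendsto_atTop.const_mul 4
    have := ((t1.add t2).add t3).sub hlog
    simp only [hf]
    convert this using 2 with y
    simp [mul_inv, mul_comm]
  have h0 : 0 ≤ f x := by
    apply le_of_tendsto hlim
    filter_upwards [eventually_ge_atTop x] with y hy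
    exact hanti (mem_Ici.2 hx) (mem_Ici.2 (hx.trans hy)) hy
  simpa [hf, sub_nonneg] using h0

noncomputable def stirG (x : ℝ) : ℝ := log (Gamma x) - (x - 1/2) * log x + x
noncomputable def stirD (x : ℝ) : ℝ := (x + 1/2) * (log (x+1) - log x) - 1

lemma stirG_rec {x : ℝ} (hx : 0 < x) : stirG x = stirD x + stirG (x+1) := by
  unfold stirG stirD
  rw [Real.Gamma_add_one hx.ne', Real.log_mul hx.ne' (Real.Gamma_pos_of_pos hx).ne']
  ring

lemma stirD_nonneg {x : ℝ} (hx : 1 ≤ x) : 0 ≤ stirD x := by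
  have h := stir_log_lower hx
  have h2 : (0:ℝ) < x + 1/2 := by linarith
  have := mul_le_mul_of_nonneg_left h h2.le
  unfold stirD
  have he : (x + 1/2) * (2/(2*x+1)) = 1 := by field_simp
  linarith [he ▸ this]

lemma stirD_le {x : ℝ} (hx : 1 ≤ x) : stirD x ≤ 1/(12*x) - 1/(12*(x+1)) := by
  have h := stir_log_upper hx
  have h2 : (0:ℝ) < x + 1/2 := by linarith
  have := mul_le_mul_of_nonneg_left h h2.le
  unfold stirD
  have hx0 : (0:ℝ) < x := by linarith
  have he : (x + 1/2) * ((6*x)⁻¹ + (6*(x+1))⁻¹ + 4 * (3*(2*x+1))⁻¹)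
      = 1 + (1/(12*x) - 1/(12*(x+1))) := by
    field_simp; ring
  linarith [he ▸ this]

lemma stirG_sum {x : ℝ} (hx : 0 < x) (N : ℕ) :
    stirG x = (∑ n ∈ Finset.range N, stirD (x + n)) + stirG (x + N) := by
  induction N with
  | zero => simp
  | succ N ih =>
    rw [ih, Finset.sum_range_succ, stirG_rec (by positivity : (0:ℝ) < x + N)]
    push_cast
    ring_nf


noncomputable def stirL : ℝ := log (Real.sqrt (2 * Real.pi))

-- limit of  a n := log n! - (n+1/2) log n + n
lemma stir_a_tendsto :
    Tendsto (fun n : ℕ => Real.log (n.factorial) - ((n:ℝ) + 1/2) * Real.log n + n)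
      atTop (nhds stirL) := by
  have hπ : (0:ℝ) < Real.sqrt π := Real.sqrt_pos.2 Real.pi_pos
  have hlog : Tendsto (fun n : ℕ => Real.log (Stirling.stirlingSeq n)) atTop
      (nhds (Real.log (Real.sqrt π))) :=
    ((Real.continuousAt_log hπ.ne').tendsto).comp Stirling.tendsto_stirlingSeq_sqrt_pi
  have key : ∀ᶠ n : ℕ in atTop,
      Real.log (Stirling.stirlingSeq n) + (1/2) * Real.log 2
        = Real.log (n.factorial) - ((n:ℝ) + 1/2) * Real.log n + n := by
    filter_upwards [eventually_ge_atTop 1] with n hn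
    have hn0 : (0:ℝ) < n := by exact_mod_cast hn
    unfold Stirling.stirlingSeq
    rw [Real.log_div (by positivity) (by positivity), Real.log_mul (by positivity) (by positivity),
      Real.log_sqrt (by positivity), Real.log_pow, Real.log_div hn0.ne' (exp_pos 1).ne',
      Real.log_mul (by norm_num) hn0.ne', Real.log_exp]
    ring
  have h2 : Tendsto (fun n : ℕ => Real.log (Stirling.stirlingSeq n) + (1/2) * Real.log 2)
      atTop (nhds (Real.log (Real.sqrt π) + (1/2) * Real.log 2)) :=
    hlog.add tendsto_const_nhds
  rw [tendsto_congr' key] at h2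
  convert h2 using 2
  unfold stirL
  rw [Real.log_sqrt (by positivity), Real.log_sqrt Real.pi_pos.le,
    Real.log_mul (by norm_num) Real.pi_pos.ne']
  ring



lemma stirD_tendsto_zero : Tendsto (fun n : ℕ => stirD n) atTop (nhds 0) := by
  apply squeeze_zero'
  · filter_upwards [eventually_ge_atTop 1] with n hn
    exact stirD_nonneg (by exact_mod_cast hn)
  · filter_upwards [eventually_ge_atTop 1] with n hn
    have hn0 : (0:ℝ) < n := by exact_mod_cast hn
    have := stirD_le (x := n) (by exact_mod_cast hn)
    have h2 : 1/(12*(n:ℝ)) - 1/(12*((n:ℝ)+1)) ≤ (1/12) / n := by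
      have h3 : (0:ℝ) ≤ 1/(12*((n:ℝ)+1)) := by positivity
      have h4 : 1/(12*(n:ℝ)) = 1/12/(n:ℝ) := by rw [div_div]
      linarith
    exact this.trans h2
  · exact tendsto_const_div_atTop_nhds_zero_nat (1/12)

lemma stirG_nat_tendsto : Tendsto (fun n : ℕ => stirG ((n:ℝ)+1)) atTop (nhds stirL) := by
  have key : ∀ n : ℕ, stirG ((n:ℝ)+1)
      = (Real.log (n.factorial) - ((n:ℝ) + 1/2) * Real.log n + n) - stirD n := by
    intro n
    unfold stirG stirD
    rw [Real.Gamma_nat_eq_factorial]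
    ring
  simp only [key]
  have := stir_a_tendsto.sub stirD_tendsto_zero
  simpa using this


lemma stir_log_one_add_le {u : ℝ} (hu : 0 ≤ u) : log (1+u) ≤ u := by
  have := Real.log_le_sub_one_of_pos (x := 1+u) (by linarith)
  linarith

lemma stir_le_log_one_add {u : ℝ} (hu : 0 ≤ u) : u/(1+u) ≤ log (1+u) := by
  have h1 : (0:ℝ) < 1 + u := by linarith
  have := Real.log_le_sub_one_of_pos (x := (1+u)⁻¹) (by positivity)
  rw [Real.log_inv] at this
  have h2 : (1+u)⁻¹ - 1 = -(u/(1+u)) := by field_simp; ring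
  linarith [h2 ▸ this]

lemma stir_conv_upper (n : ℕ) (hn : 2 ≤ n) (t : ℝ) (ht : 0 ≤ t) (ht1 : t ≤ 1) :
    log (Gamma ((n:ℝ)+t)) ≤ log (Gamma n) + t * log (n:ℝ) := by
  have hN : (2:ℝ) ≤ n := by exact_mod_cast hn
  have hmem1 : (n:ℝ) ∈ Ioi (0:ℝ) := by simp; linarith
  have hmem2 : (n:ℝ)+1 ∈ Ioi (0:ℝ) := by simp; linarith
  have := Real.convexOn_log_Gamma.2 hmem1 hmem2 (by linarith : 0 ≤ 1-t) ht (by ring)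
  have hΓ : Real.Gamma ((n:ℝ)+1) = n * Real.Gamma n :=
    Real.Gamma_add_one (by positivity)
  have hsm : (1-t) • (n:ℝ) + t • ((n:ℝ)+1) = (n:ℝ) + t := by simp; ring
  rw [hsm] at this
  simp only [Function.comp_apply, smul_eq_mul] at this
  rw [hΓ, Real.log_mul (by positivity) (Real.Gamma_pos_of_pos (by positivity)).ne'] at this
  calc log (Gamma ((n:ℝ)+t)) ≤ (1-t) * log (Gamma n) + t * (log n + log (Gamma n)) := this
    _ = log (Gamma n) + t * log (n:ℝ) := by ring

lemma stir_conv_lower (n : ℕ) (hn : 2 ≤ n) (t : ℝ) (ht : 0 ≤ t) (ht1 : t ≤ 1) :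
    log (Gamma n) + t * log ((n:ℝ)-1) ≤ log (Gamma ((n:ℝ)+t)) := by
  have hN : (2:ℝ) ≤ n := by exact_mod_cast hn
  have hmem1 : (n:ℝ)-1 ∈ Ioi (0:ℝ) := by simp; linarith
  have hmem2 : (n:ℝ)+t ∈ Ioi (0:ℝ) := by simp; linarith
  have h1t : (0:ℝ) < 1 + t := by linarith
  have hw1 : 0 ≤ t/(1+t) := by positivity
  have hw2 : 0 ≤ 1/(1+t) := by positivity
  have hsum : t/(1+t) + 1/(1+t) = 1 := by field_simp; ring
  have := Real.convexOn_log_Gamma.2 hmem1 hmem2 hw1 hw2 hsum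
  have hsm : (t/(1+t)) • ((n:ℝ)-1) + (1/(1+t)) • ((n:ℝ)+t) = (n:ℝ) := by
    simp only [smul_eq_mul]; field_simp; ring
  rw [hsm] at this
  simp only [Function.comp_apply, smul_eq_mul] at this
  -- log Γ(n) = log (n-1) + log Γ(n-1)
  have hΓ : Real.Gamma ((n:ℝ)) = ((n:ℝ)-1) * Real.Gamma ((n:ℝ)-1) := by
    have := Real.Gamma_add_one (s := (n:ℝ)-1) (by intro h; rw [sub_eq_zero] at h; linarith [h ▸ hN])
    rw [← this]; norm_num
  have hΓpos : 0 < Real.Gamma ((n:ℝ)-1) := Real.Gamma_pos_of_pos (by linarith)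
  rw [hΓ, Real.log_mul (by intro h; rw [sub_eq_zero] at h; linarith [h ▸ hN]) hΓpos.ne'] at this
  -- this : log(n-1) + logΓ(n-1) ≤ (t/(1+t)) * logΓ(n-1) + (1/(1+t)) * logΓ(n+t)
  have key : (1+t) * (log ((n:ℝ)-1) + log (Gamma ((n:ℝ)-1)))
      ≤ t * log (Gamma ((n:ℝ)-1)) + log (Gamma ((n:ℝ)+t)) := by
    have := mul_le_mul_of_nonneg_left this h1t.le
    calc (1+t) * (log ((n:ℝ)-1) + log (Gamma ((n:ℝ)-1)))
        ≤ (1+t) * (t/(1+t) * log (Gamma ((n:ℝ)-1)) + 1/(1+t) * log (Gamma ((n:ℝ)+t))) := this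
      _ = t * log (Gamma ((n:ℝ)-1)) + log (Gamma ((n:ℝ)+t)) := by field_simp
  have hΓn : log (Gamma (n:ℝ)) = log ((n:ℝ)-1) + log (Gamma ((n:ℝ)-1)) := by
    rw [hΓ, Real.log_mul (by intro h; rw [sub_eq_zero] at h; linarith [h ▸ hN]) hΓpos.ne']
  rw [hΓn]; nlinarith [key]



lemma stirG_shift (n : ℕ) (hn : 2 ≤ n) (t : ℝ) (ht : 0 ≤ t) (ht1 : t ≤ 1) :
    stirG (n:ℝ) - 2/((n:ℝ)-1) ≤ stirG ((n:ℝ)+t) ∧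
      stirG ((n:ℝ)+t) ≤ stirG (n:ℝ) + 2/((n:ℝ)-1) := by
  have hN : (2:ℝ) ≤ n := by exact_mod_cast hn
  have hN0 : (0:ℝ) < n := by linarith
  have hNt : (0:ℝ) < (n:ℝ) + t := by linarith
  have hN1 : (0:ℝ) < (n:ℝ) - 1 := by linarith
  have hup := stir_conv_upper n hn t ht ht1
  have hlo := stir_conv_lower n hn t ht ht1
  set N := (n:ℝ)
  set A := log (Gamma (N+t)) with hA
  set B := log (Gamma N) with hB
  set P := log (N+t) with hP
  set Q := log N with hQ
  set R := log (N-1) with hR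
  have hPQ : P - Q = log (1 + t/N) := by
    rw [hP, hQ, ← Real.log_div hNt.ne' hN0.ne']
    congr 1; field_simp
  have hL1 : P - Q ≤ t/N := by
    rw [hPQ]; exact stir_log_one_add_le (by positivity)
  have hL2 : t/(N+t) ≤ P - Q := by
    rw [hPQ]
    have h := stir_le_log_one_add (u := t/N) (by positivity)
    have hne : 1 + t/N ≠ 0 := by positivity
    have he : (t/N)/(1+t/N) = t/(N+t) := by
      field_simp
    rw [he] at h
    exact h
  have hQR : Q - R ≤ 1/(N-1) := by
    rw [hQ, hR, ← Real.log_div hN0.ne' hN1.ne']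
    have he : N/(N-1) = 1 + 1/(N-1) := by field_simp; ring
    rw [he]
    exact stir_log_one_add_le (by positivity)
  have hQRpos : 0 ≤ Q - R := by
    rw [hQ, hR, sub_nonneg]
    exact Real.log_le_log hN1 (by linarith)
  have hc : (0:ℝ) < N + t - 1/2 := by linarith
  have m1 : (N+t-1/2) * (t/(N+t)) ≤ (N+t-1/2)*(P-Q) := mul_le_mul_of_nonneg_left hL2 hc.le
  have m2 : (N+t-1/2)*(P-Q) ≤ (N+t-1/2) * (t/N) := mul_le_mul_of_nonneg_left hL1 hc.le
  have e1 : (N+t-1/2) * (t/(N+t)) = t - (t/2)/(N+t) := by field_simp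
  have e2 : (N+t-1/2) * (t/N) = t + (t*(t-1/2))/N := by field_simp; ring
  have s1 : (t/2)/(N+t) ≤ 2/(N-1) := by
    rw [div_le_div_iff₀ hNt (by linarith)]
    nlinarith
  have s2 : (t*(t-1/2))/N ≤ 1/(N-1) := by
    rw [div_le_div_iff₀ hN0 (by linarith)]
    nlinarith [mul_nonneg (mul_nonneg ht (sub_nonneg.2 ht1)) hN1.le,
      mul_nonneg hN1.le (sub_nonneg.2 ht1)]
  have s3 : t*(Q-R) ≤ 1/(N-1) := by
    have := mul_le_mul ht1 hQR hQRpos (by norm_num : (0:ℝ) ≤ 1)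
    simpa using this
  have hqr : t*R = t*Q - t*(Q-R) := by ring
  have hdiff : stirG (N+t) - stirG N
      = (A - B) - (N+t-1/2)*(P-Q) - t*Q + t := by
    unfold stirG
    rw [← hA, ← hB, ← hP, ← hQ]
    ring
  constructor
  · -- lower
    have htwo : 2/(N-1) = 1/(N-1) + 1/(N-1) := by ring
    nlinarith [hlo, m2, e2, s2, s3, hqr, hdiff, htwo]
  · -- upper
    nlinarith [hup, m1, e1, s1, hdiff]
-- E1: limit of stirG along real shifts
lemma stirG_nat_tendsto' : Tendsto (fun n : ℕ => stirG (n:ℝ)) atTop (nhds stirL) := by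
  have h := stirG_nat_tendsto
  have heq : (fun n : ℕ => stirG ((n:ℝ)+1)) = fun n : ℕ => stirG (((n+1 : ℕ):ℝ)) := by
    funext n; push_cast; ring_nf
  rw [heq] at h
  exact (tendsto_add_atTop_iff_nat 1).1 h

lemma stirG_real_tendsto {x : ℝ} (hx : 1 ≤ x) :
    Tendsto (fun N : ℕ => stirG (x + N)) atTop (nhds stirL) := by
  set m : ℕ := ⌊x⌋₊ with hm
  have hx0 : (0:ℝ) ≤ x := by linarith
  have hm1 : 1 ≤ m := Nat.le_floor (by exact_mod_cast hx)
  set t : ℝ := x - m with htdef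
  have ht : 0 ≤ t := by
    have := Nat.floor_le hx0
    simp only [htdef]; linarith
  have ht1 : t ≤ 1 := by
    have := (Nat.lt_floor_add_one x).le
    simp only [htdef]; linarith
  have hshift : Tendsto (fun N : ℕ => m + N) atTop atTop :=
    tendsto_atTop_atTop_of_monotone (fun a b h => by omega) (fun b => ⟨b, by omega⟩)
  have hG : Tendsto (fun N : ℕ => stirG (((m+N : ℕ)):ℝ)) atTop (nhds stirL) :=
    stirG_nat_tendsto'.comp hshift
  have hC : Tendsto (fun N : ℕ => 2/(((m+N : ℕ):ℝ)-1)) atTop (nhds 0) := by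
    apply Tendsto.div_atTop tendsto_const_nhds
    have : Tendsto (fun N : ℕ => ((m+N : ℕ):ℝ)) atTop atTop :=
      tendsto_natCast_atTop_atTop.comp hshift
    exact tendsto_atTop_add_const_right _ (-1) this
  have hglim : Tendsto (fun N : ℕ => stirG (((m+N : ℕ)):ℝ) - 2/(((m+N : ℕ):ℝ)-1))
      atTop (nhds stirL) := by simpa using hG.sub hC
  have hhlim : Tendsto (fun N : ℕ => stirG (((m+N : ℕ)):ℝ) + 2/(((m+N : ℕ):ℝ)-1))
      atTop (nhds stirL) := by simpa using hG.add hC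
  apply tendsto_of_tendsto_of_tendsto_of_le_of_le' hglim hhlim
  · filter_upwards [eventually_ge_atTop 1] with N hN
    have h2 : 2 ≤ m + N := by omega
    have heq : x + N = ((m+N : ℕ):ℝ) + t := by push_cast; simp only [htdef]; ring
    rw [heq]
    exact (stirG_shift (m+N) h2 t ht ht1).1
  · filter_upwards [eventually_ge_atTop 1] with N hN
    have h2 : 2 ≤ m + N := by omega
    have heq : x + N = ((m+N : ℕ):ℝ) + t := by push_cast; simp only [htdef]; ring
    rw [heq]
    exact (stirG_shift (m+N) h2 t ht ht1).2

-- E2 : bounds on stirG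
lemma stirG_bounds {x : ℝ} (hx : 1 ≤ x) : stirL ≤ stirG x ∧ stirG x ≤ stirL + 1/12 := by
  have hx0 : (0:ℝ) < x := by linarith
  set S : ℕ → ℝ := fun N => ∑ n ∈ Finset.range N, stirD (x + n) with hS
  have hsum : ∀ N, S N = stirG x - stirG (x + N) := by
    intro N
    have := stirG_sum hx0 N
    simp only [hS]; linarith
  have hStend : Tendsto S atTop (nhds (stirG x - stirL)) := by
    have := (tendsto_const_nhds (x := stirG x) (f := atTop (α := ℕ))).sub
      (stirG_real_tendsto hx)
    apply this.congr
    intro N; rw [hsum N]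
  have hS0 : ∀ N, 0 ≤ S N := by
    intro N
    apply Finset.sum_nonneg
    intro n _
    exact stirD_nonneg (by have : (0:ℝ) ≤ (n:ℝ) := Nat.cast_nonneg n; linarith)
  have hS1 : ∀ N, S N ≤ 1/12 := by
    intro N
    set f : ℕ → ℝ := fun n => 1/(12*(x+n)) with hf
    have step : S N ≤ ∑ n ∈ Finset.range N, (f n - f (n+1)) := by
      apply Finset.sum_le_sum
      intro n _
      have h1 : (1:ℝ) ≤ x + n := by
        have : (0:ℝ) ≤ (n:ℝ) := Nat.cast_nonneg n; linarith
      have := stirD_le h1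
      have he : 1/(12*(x+n)) - 1/(12*((x+n)+1)) = f n - f (n+1) := by
        simp only [hf]; push_cast; ring_nf
      linarith [he ▸ this]
    rw [Finset.sum_range_sub' f N] at step
    have hfN : 0 ≤ f N := by simp only [hf]; positivity
    have hf0 : f 0 ≤ 1/12 := by
      simp only [hf, Nat.cast_zero, add_zero]
      rw [div_le_div_iff₀ (by positivity) (by norm_num)]
      linarith
    linarith
  constructor
  · have : stirG x - stirL ≥ 0 := ge_of_tendsto' hStend hS0
    linarith
  · have : stirG x - stirL ≤ 1/12 := le_of_tendsto' hStend hS1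
    linarith

theorem stmt5 (x : ℝ) (hx : 1 ≤ x) :
    Real.sqrt (2 * Real.pi) * x ^ (x - 1/2) * Real.exp (-x) ≤ Real.Gamma x ∧
    Real.Gamma x ≤ Real.sqrt (2 * Real.pi) * x ^ (x - 1/2) * Real.exp (-x) * Real.exp (1/12) := by
  have hx0 : (0:ℝ) < x := by linarith
  have hΓ : 0 < Real.Gamma x := Real.Gamma_pos_of_pos hx0
  have hsqrt : (0:ℝ) < Real.sqrt (2 * Real.pi) := Real.sqrt_pos.2 (by positivity)
  have hlogΓ : Real.log (Real.Gamma x) = stirG x + (x - 1/2) * Real.log x - x := by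
    unfold stirG; ring
  have hΓeq : Real.Gamma x = Real.exp (stirG x + (x - 1/2) * Real.log x - x) := by
    rw [← hlogΓ, Real.exp_log hΓ]
  have hrpow : x ^ (x - 1/2) = Real.exp (Real.log x * (x - 1/2)) :=
    Real.rpow_def_of_pos hx0 _
  have hsq : Real.sqrt (2 * Real.pi) = Real.exp stirL := by
    rw [stirL, Real.exp_log hsqrt]
  obtain ⟨hb1, hb2⟩ := stirG_bounds hx
  constructor
  · rw [hΓeq, hsq, hrpow, ← Real.exp_add, ← Real.exp_add]
    apply Real.exp_le_exp.2
    linarith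
  · rw [hΓeq, hsq, hrpow, ← Real.exp_add, ← Real.exp_add, ← Real.exp_add]
    apply Real.exp_le_exp.2
    linarith
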